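/- Let L be a strongly differentiable functional on finite signed measures possessing a gradient function ∇L(x;Λ), i.e., DL(Λ)[ν] = ∫ ∇L(x;Λ) ν(dx) for all finite signed ν. If a finite nonnegative measure Λ is a local minimizer of L over the cone of finite nonnegative measures, then ∇L(x;Λ) ≥ 0 for all x and ∇L(x;Λ) = 0 for Λ-almost every x. -/

import Mathlib

open MeasureTheory
open scoped NNReal

/-- Total variation norm on the space of finite signed Borel measures on `ℝ`. -/
noncomputable def tvNorm (ν : SignedMeasure ℝ) : ℝ := (ν.totalVariation Set.univ).toReal

/-- Integral of a function against a finite signed measure, via its Jordan decomposition. -/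
noncomputable def signedIntegral (f : ℝ → ℝ) (ν : SignedMeasure ℝ) : ℝ :=
  (∫ x, f x ∂ν.toJordanDecomposition.posPart) - ∫ x, f x ∂ν.toJordanDecomposition.negPart

/-- The Jordan decomposition with positive part `μ` and zero negative part. -/
noncomputable def jdOf (μ : Measure ℝ) [IsFiniteMeasure μ] : JordanDecomposition ℝ where
  posPart := μ
  negPart := 0
  mutuallySingular := Measure.MutuallySingular.zero_right

lemma toJD_of_measure (μ : Measure ℝ) [IsFiniteMeasure μ] :
    μ.toSignedMeasure.toJordanDecomposition = jdOf μ := by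
  have h : (jdOf μ).toSignedMeasure = μ.toSignedMeasure := by
    simp [JordanDecomposition.toSignedMeasure, jdOf, Measure.toSignedMeasure_zero]
  rw [← h, JordanDecomposition.toJordanDecomposition_toSignedMeasure]

lemma tvNorm_of_measure (μ : Measure ℝ) [IsFiniteMeasure μ] :
    tvNorm μ.toSignedMeasure = (μ Set.univ).toReal := by
  unfold tvNorm SignedMeasure.totalVariation
  rw [toJD_of_measure]
  simp [jdOf]

lemma signedIntegral_of_measure (f : ℝ → ℝ) (μ : Measure ℝ) [IsFiniteMeasure μ] :
    signedIntegral f μ.toSignedMeasure = ∫ x, f x ∂μ := by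
  unfold signedIntegral
  rw [toJD_of_measure]
  simp [jdOf]

lemma tvNorm_neg (ν : SignedMeasure ℝ) : tvNorm (-ν) = tvNorm ν := by
  unfold tvNorm
  rw [SignedMeasure.totalVariation_neg]

lemma toSM_of_add (μ ν ρ : Measure ℝ) [IsFiniteMeasure μ] [IsFiniteMeasure ν]
    [IsFiniteMeasure ρ] (h : μ + ν = ρ) :
    μ.toSignedMeasure = ρ.toSignedMeasure - ν.toSignedMeasure := by
  ext1 i hi
  rw [MeasureTheory.VectorMeasure.sub_apply, Measure.toSignedMeasure_apply_measurable hi,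
    Measure.toSignedMeasure_apply_measurable hi, Measure.toSignedMeasure_apply_measurable hi,
    ← h, measureReal_add_apply]
  ring

lemma signedIntegral_neg (f : ℝ → ℝ) (ν : SignedMeasure ℝ) :
    signedIntegral f (-ν) = -signedIntegral f ν := by
  unfold signedIntegral
  rw [SignedMeasure.toJordanDecomposition_neg, JordanDecomposition.neg_posPart,
    JordanDecomposition.neg_negPart]
  ring

/-- Theorem 1 of the paper: if `L` is strongly differentiable at a finite nonnegative
measure `Λ` with bounded gradient function `∇L(·;Λ)` (so `DL(Λ)[ν] = ∫ ∇L(x;Λ) ν(dx)`),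
and `Λ` is a local minimizer (in total variation norm) of `L` over the cone of finite
nonnegative measures, then `∇L(x;Λ) ≥ 0` for all `x` and `∇L(x;Λ) = 0` for `Λ`-a.e. `x`. -/
theorem necessary_conditions_measure_minimizer
    (L : SignedMeasure ℝ → ℝ) (Λ : Measure ℝ) [IsFiniteMeasure Λ]
    (g : ℝ → ℝ) (hgmeas : Measurable g) (hgbd : ∃ C : ℝ, ∀ x, |g x| ≤ C)
    (hdiff : ∀ ε > 0, ∃ δ > 0, ∀ ν : SignedMeasure ℝ, tvNorm ν ≤ δ →
      |L (Λ.toSignedMeasure + ν) - L Λ.toSignedMeasure - signedIntegral g ν| ≤ ε * tvNorm ν)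
    (hmin : ∃ δ > 0, ∀ (Λ' : Measure ℝ) [IsFiniteMeasure Λ'],
      tvNorm (Λ'.toSignedMeasure - Λ.toSignedMeasure) ≤ δ →
        L Λ.toSignedMeasure ≤ L Λ'.toSignedMeasure) :
    (∀ x, 0 ≤ g x) ∧ (∀ᵐ x ∂Λ, g x = 0) := by
  obtain ⟨C, hC⟩ := hgbd
  obtain ⟨δ', hδ', hm⟩ := hmin
  -- Part 1: g ≥ 0 everywhere
  have h1 : ∀ x, 0 ≤ g x := by
    intro x₀
    by_contra hneg
    push_neg at hneg
    set ε : ℝ := -g x₀ / 2 with hε_def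
    have hε : 0 < ε := by rw [hε_def]; linarith
    obtain ⟨δ, hδ, hd⟩ := hdiff ε hε
    set r : ℝ := min δ δ' with hr_def
    have hr : 0 < r := lt_min hδ hδ'
    set μ : Measure ℝ := r.toNNReal • Measure.dirac x₀ with hμ_def
    have hμuniv : (μ Set.univ).toReal = r := by
      simp [hμ_def, Measure.smul_apply, Real.coe_toNNReal r hr.le]
    set ν : SignedMeasure ℝ := μ.toSignedMeasure with hν_def
    have htv : tvNorm ν = r := by rw [hν_def, tvNorm_of_measure, hμuniv]
    have hΛ' : (Λ + μ).toSignedMeasure = Λ.toSignedMeasure + ν := by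
      rw [hν_def, Measure.toSignedMeasure_add]
    have hsi : signedIntegral g ν = r * g x₀ := by
      rw [hν_def, signedIntegral_of_measure, hμ_def, integral_smul_nnreal_measure,
        integral_dirac]
      rw [NNReal.smul_def, Real.coe_toNNReal r hr.le, smul_eq_mul]
    have hmin' : L Λ.toSignedMeasure ≤ L (Λ + μ).toSignedMeasure := by
      apply hm (Λ + μ)
      rw [hΛ', add_sub_cancel_left, htv]
      exact min_le_right _ _
    have hder := hd ν (by rw [htv]; exact min_le_left _ _)
    rw [← hΛ', htv, hsi] at hder
    have := abs_le.mp hder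
    nlinarith [this.2, hmin']
  -- Part 2: ∫ g dΛ ≤ 0, hence ∫ g dΛ = 0, hence g = 0 a.e.
  have hint : Integrable g Λ :=
    (integrable_const C).mono' hgmeas.aestronglyMeasurable
      (Filter.Eventually.of_forall fun x => by simpa using hC x)
  set I : ℝ := ∫ x, g x ∂Λ with hI_def
  set M : ℝ := (Λ Set.univ).toReal with hM_def
  have hM0 : 0 ≤ M := ENNReal.toReal_nonneg
  have key : ∀ ε > 0, I ≤ ε * M := by
    intro ε hε
    obtain ⟨δ, hδ, hd⟩ := hdiff ε hε
    set t : ℝ := min 1 (min δ δ' / (M + 1)) with ht_def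
    have ht : 0 < t := lt_min one_pos (div_pos (lt_min hδ hδ') (by linarith))
    have ht1 : t ≤ 1 := min_le_left _ _
    have htM : t * M ≤ min δ δ' := by
      calc t * M ≤ (min δ δ' / (M + 1)) * M := by
            apply mul_le_mul_of_nonneg_right (min_le_right _ _) hM0
        _ ≤ min δ δ' := by
            rw [div_mul_eq_mul_div, div_le_iff₀ (by linarith)]
            nlinarith [le_min hδ.le hδ'.le]
    set c : ℝ≥0 := t.toNNReal with hc_def
    have hc1 : c ≤ 1 := by
      rw [hc_def]
      exact Real.toNNReal_le_one.mpr ht1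
    set μ : Measure ℝ := c • Λ with hμ_def
    set Λ' : Measure ℝ := ((1 : ℝ≥0) - c) • Λ with hΛ'_def
    have hsum : Λ' + μ = Λ := by
      rw [hΛ'_def, hμ_def, ← add_smul, tsub_add_cancel_of_le hc1, one_smul]
    set ν : SignedMeasure ℝ := -μ.toSignedMeasure with hν_def
    have hΛ'sm : Λ'.toSignedMeasure = Λ.toSignedMeasure + ν := by
      rw [hν_def, ← sub_eq_add_neg]
      exact toSM_of_add Λ' μ Λ hsum
    have hμuniv : (μ Set.univ).toReal = t * M := by
      rw [hμ_def]
      simp [Measure.smul_apply, ENNReal.toReal_smul, hc_def, Real.coe_toNNReal t ht.le,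
        smul_eq_mul, hM_def]
    have htv : tvNorm ν = t * M := by
      rw [hν_def, tvNorm_neg, tvNorm_of_measure, hμuniv]
    have hsi : signedIntegral g ν = -(t * I) := by
      rw [hν_def, signedIntegral_neg, signedIntegral_of_measure, hμ_def,
        integral_smul_nnreal_measure]
      rw [NNReal.smul_def, Real.coe_toNNReal t ht.le, smul_eq_mul, hI_def]
    have hmin' : L Λ.toSignedMeasure ≤ L Λ'.toSignedMeasure := by
      apply hm Λ'
      rw [hΛ'sm, add_sub_cancel_left, htv]
      exact le_trans htM (min_le_right _ _)
    have hder := hd ν (by rw [htv]; exact le_trans htM (min_le_left _ _))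
    rw [← hΛ'sm, htv, hsi] at hder
    have h2 := abs_le.mp hder
    have : t * I ≤ ε * (t * M) := by linarith [h2.2, hmin']
    have hεtM : ε * (t * M) = t * (ε * M) := by ring
    rw [hεtM] at this
    exact le_of_mul_le_mul_left (by linarith) ht
  have hI0 : 0 ≤ I := integral_nonneg h1
  have hIle : I ≤ 0 := by
    by_contra h
    push_neg at h
    have := key (I / (2 * (M + 1))) (by positivity)
    rw [div_mul_eq_mul_div, le_div_iff₀ (by positivity : (0:ℝ) < 2 * (M + 1))] at this
    nlinarith
  have hIeq : I = 0 := le_antisymm hIle hI0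
  have := (integral_eq_zero_iff_of_nonneg h1 hint).mp hIeq
  exact ⟨h1, by filter_upwards [this] with x hx using hx⟩
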